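/- Let (X,T) be a TDS which is mean sensitive with sensitivity constant δ > 0, and set η = δ/2. Then the set D_η = {(x,y) ∈ X × X : limsup_{N→∞} (1/N) Σ_{k=0}^{N−1} d(T^k x, T^k y) ≥ η} is a dense G_δ subset of X × X. -/

import Mathlib

open Filter Metric Set

/-- Birkhoff average of the distance between the orbits of `x` and `y`. -/
noncomputable def birkhoffAvg {X : Type*} [PseudoMetricSpace X]
    (T : X → X) (x y : X) (N : ℕ) : ℝ :=
  (∑ k ∈ Finset.range N, dist (T^[k] x) (T^[k] y)) / N

/-- A pair `(x,y)` is mean proximal if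
`liminf_{N→∞} (1/N) ∑_{k<N} d(T^k x, T^k y) = 0`. -/
def MeanProximalPair {X : Type*} [PseudoMetricSpace X] (T : X → X) (x y : X) : Prop :=
  liminf (birkhoffAvg T x y) atTop = 0

/-- `(X,T)` is mean sensitive. -/
def MeanSensitive {X : Type*} [PseudoMetricSpace X] (T : X → X) : Prop :=
  ∃ δ > (0 : ℝ), ∀ x : X, ∀ ε > (0 : ℝ), ∃ y ∈ ball x ε,
    δ < limsup (birkhoffAvg T x y) atTop

/-- `K` is a mean Li-Yorke set with modulus `η`. -/
def MeanLiYorkeSetMod {X : Type*} [PseudoMetricSpace X]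
    (T : X → X) (η : ℝ) (K : Set X) : Prop :=
  ∀ x ∈ K, ∀ y ∈ K, x ≠ y →
    MeanProximalPair T x y ∧ η ≤ limsup (birkhoffAvg T x y) atTop

lemma birkhoffAvg_nonneg {X : Type*} [PseudoMetricSpace X] (T : X → X) (x y : X) (N : ℕ) :
    0 ≤ birkhoffAvg T x y N :=
  div_nonneg (Finset.sum_nonneg fun _ _ => dist_nonneg) (Nat.cast_nonneg N)

lemma birkhoffAvg_le {X : Type*} [PseudoMetricSpace X] (T : X → X) (x y : X) (N : ℕ)
    {C : ℝ} (hC : 0 ≤ C) (h : ∀ a b : X, dist a b ≤ C) :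
    birkhoffAvg T x y N ≤ C := by
  rcases Nat.eq_zero_or_pos N with h0 | hN
  · simp [birkhoffAvg, h0, hC]
  · have hsum : (∑ k ∈ Finset.range N, dist (T^[k] x) (T^[k] y)) ≤ C * N := by
      calc (∑ k ∈ Finset.range N, dist (T^[k] x) (T^[k] y))
          ≤ ∑ _k ∈ Finset.range N, C := Finset.sum_le_sum fun k _ => h _ _
        _ = C * N := by simp [mul_comm]
    rw [birkhoffAvg, div_le_iff₀ (by exact_mod_cast hN)]
    exact hsum

lemma birkhoffAvg_comm {X : Type*} [PseudoMetricSpace X] (T : X → X) (x y : X) :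
    birkhoffAvg T x y = birkhoffAvg T y x := by
  funext N; simp [birkhoffAvg, dist_comm]

lemma birkhoffAvg_triangle {X : Type*} [PseudoMetricSpace X] (T : X → X) (x y z : X) (N : ℕ) :
    birkhoffAvg T x z N ≤ birkhoffAvg T x y N + birkhoffAvg T y z N := by
  rw [birkhoffAvg, birkhoffAvg, birkhoffAvg, ← add_div, ← Finset.sum_add_distrib]
  rcases Nat.eq_zero_or_pos N with h0 | hN
  · simp [h0]
  · have hN' : (0 : ℝ) < N := by exact_mod_cast hN
    gcongr with k hk
    exact dist_triangle _ _ _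

/-- If `(X,T)` is mean sensitive with sensitivity constant `δ`, then for `η = δ/2`
the set `D_η` of pairs whose upper Birkhoff distance average is at least `η` is a
dense `G_δ` subset of `X × X`. -/
theorem Deta_dense_Gdelta_of_meanSensitive
    {X : Type*} [MetricSpace X] [CompactSpace X] (T : X → X) (hT : Continuous T)
    (δ : ℝ) (hδ : 0 < δ)
    (hsens : ∀ x : X, ∀ ε > (0 : ℝ), ∃ y ∈ ball x ε,
      δ < limsup (birkhoffAvg T x y) atTop) :
    IsGδ {z : X × X | δ / 2 ≤ limsup (birkhoffAvg T z.1 z.2) atTop} ∧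
    Dense {z : X × X | δ / 2 ≤ limsup (birkhoffAvg T z.1 z.2) atTop} := by
  have hcont : ∀ N : ℕ, Continuous fun z : X × X => birkhoffAvg T z.1 z.2 N := by
    intro N
    unfold birkhoffAvg
    exact (continuous_finset_sum _ fun k _ =>
      ((hT.iterate k).comp continuous_fst).dist ((hT.iterate k).comp continuous_snd)).div_const _
  have hbdd : ∀ x y : X, IsBoundedUnder (· ≤ ·) atTop (birkhoffAvg T x y) := by
    intro x y
    obtain ⟨C, hC⟩ := Metric.isBounded_iff.mp (isCompact_univ : IsCompact (univ : Set X)).isBounded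
    have hC0 : (0 : ℝ) ≤ C := le_trans (by simp) (hC (mem_univ x) (mem_univ x))
    exact isBoundedUnder_of ⟨C, fun N =>
      birkhoffAvg_le T x y N hC0 fun a b => hC (mem_univ a) (mem_univ b)⟩
  have hbdd' : ∀ x y : X, IsBoundedUnder (· ≥ ·) atTop (birkhoffAvg T x y) := fun x y =>
    isBoundedUnder_of ⟨0, fun N => birkhoffAvg_nonneg T x y N⟩
  have hDeq : {z : X × X | δ / 2 ≤ limsup (birkhoffAvg T z.1 z.2) atTop}
      = ⋂ (n : ℕ), ⋂ (M : ℕ), ⋃ (N : ℕ), ⋃ (_ : M ≤ N),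
        {z : X × X | δ / 2 - 1 / (n + 1) < birkhoffAvg T z.1 z.2 N} := by
    ext z
    simp only [mem_setOf_eq, mem_iInter, mem_iUnion]
    constructor
    · intro h n M
      have hlt : δ / 2 - 1 / (n + 1 : ℝ) < limsup (birkhoffAvg T z.1 z.2) atTop := by
        have : (0 : ℝ) < 1 / (n + 1 : ℝ) := by positivity
        linarith
      have hfreq := frequently_lt_of_lt_limsup (hbdd' z.1 z.2).isCoboundedUnder_le hlt
      obtain ⟨N, hN, hN'⟩ := (frequently_atTop.mp hfreq) M
      exact ⟨N, hN, by exact_mod_cast hN'⟩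
    · intro h
      refine le_of_forall_lt fun c hc => ?_
      obtain ⟨n, hn⟩ := exists_nat_one_div_lt (show (0 : ℝ) < δ / 2 - c by linarith)
      have hfreq : ∃ᶠ N in atTop, δ / 2 - 1 / (n + 1 : ℝ) ≤ birkhoffAvg T z.1 z.2 N := by
        refine frequently_atTop.mpr fun M => ?_
        obtain ⟨N, hN, hN'⟩ := h n M
        exact ⟨N, hN, le_of_lt (by exact_mod_cast hN')⟩
      have hle : δ / 2 - 1 / (n + 1 : ℝ) ≤ limsup (birkhoffAvg T z.1 z.2) atTop :=
        le_limsup_of_frequently_le hfreq (hbdd z.1 z.2)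
      have hn' : 1 / ((n : ℝ) + 1) < δ / 2 - c := by exact_mod_cast hn
      linarith
  constructor
  · rw [hDeq]
    exact .iInter fun n => .iInter fun M =>
      (isOpen_iUnion fun N => isOpen_iUnion fun _ =>
        isOpen_lt continuous_const (hcont N)).isGδ
  · rw [Metric.dense_iff]
    rintro ⟨x, y⟩ ε hε
    obtain ⟨x', hx'mem, hx'⟩ := hsens x ε hε
    have key : δ / 2 ≤ limsup (birkhoffAvg T x y) atTop ∨
        δ / 2 ≤ limsup (birkhoffAvg T x' y) atTop := by
      by_contra hcon
      push_neg at hcon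
      obtain ⟨h1, h2⟩ := hcon
      have h2' : limsup (birkhoffAvg T y x') atTop < δ / 2 := by
        rwa [birkhoffAvg_comm]
      have e1 : ∀ᶠ N in atTop, birkhoffAvg T x y N < δ / 2 :=
        eventually_lt_of_limsup_lt h1 (hbdd x y)
      have e2 : ∀ᶠ N in atTop, birkhoffAvg T y x' N < δ / 2 :=
        eventually_lt_of_limsup_lt h2' (hbdd y x')
      have e3 : ∀ᶠ N in atTop, birkhoffAvg T x x' N ≤ δ := by
        filter_upwards [e1, e2] with N ha hb
        have := birkhoffAvg_triangle T x y x' N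
        linarith
      have : limsup (birkhoffAvg T x x') atTop ≤ δ :=
        limsup_le_of_le (hbdd' x x').isCoboundedUnder_le e3
      exact absurd this (not_le.mpr hx')
    rcases key with h | h
    · exact ⟨(x, y), ⟨mem_ball_self hε, h⟩⟩
    · refine ⟨(x', y), ⟨?_, h⟩⟩
      rw [mem_ball, Prod.dist_eq]
      simp only [dist_self]
      exact max_lt (mem_ball.mp hx'mem) hε
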